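/- Let λ be infinite and D a regular λ⁺-good ultrafilter on λ (in particular D is countably incomplete). Then for every structure M in a countable language, the ultrapower M^λ/D is λ⁺-saturated. -/

import Mathlib

open FirstOrder Filter Cardinal

universe u

/-- `M` realizes all types (in one free variable) over parameter sets of
cardinality at most `lam`, i.e. `M` is `lam⁺`-saturated. -/
def realizesTypesLE (L : FirstOrder.Language.{u, u}) (M : Type u) [L.Structure M]
    (lam : Cardinal.{u}) : Prop :=
  ∀ A : Set M, #A ≤ lam →
    ∀ p : Set (L.Formula (↥A ⊕ Fin 1)),
      (∀ s : Finset (L.Formula (↥A ⊕ Fin 1)), ↑s ⊆ p →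
        ∃ x : M, ∀ φ ∈ s, φ.Realize (Sum.elim Subtype.val fun _ => x)) →
      ∃ x : M, ∀ φ ∈ p, φ.Realize (Sum.elim Subtype.val fun _ => x)

/-- Counting formulas over a parameter set of size at most `#α`. -/
lemma card_formula_le {L : FirstOrder.Language.{u, u}} (hL : L.card ≤ ℵ₀)
    {α : Type u} [Infinite α] (β : Type u) (hβ : #β ≤ #α) :
    #(L.Formula (β ⊕ Fin 1)) ≤ #α := by
  have h1 : #(L.Formula (β ⊕ Fin 1)) ≤ #(Σ n, L.BoundedFormula (β ⊕ Fin 1) n) :=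
    Cardinal.mk_le_of_injective (f := fun φ => (⟨0, φ⟩ : Σ n, L.BoundedFormula (β ⊕ Fin 1) n))
      (fun φ ψ h => by simpa using h)
  refine h1.trans ((FirstOrder.Language.BoundedFormula.card_le).trans ?_)
  have hβ1 : #(β ⊕ Fin 1) ≤ #α := by
    rw [Cardinal.mk_sum]
    simp only [Cardinal.lift_uzero, Cardinal.mk_fintype, Fintype.card_fin, Nat.cast_one,
      Cardinal.lift_one]
    calc #β + 1 ≤ #α + #α := add_le_add hβ (Cardinal.one_le_iff_ne_zero.2 (by simp [Cardinal.mk_ne_zero]))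
    _ = #α := Cardinal.add_eq_self (Cardinal.infinite_iff.1 inferInstance)
  have : Cardinal.lift.{u} #(β ⊕ Fin 1) + Cardinal.lift.{u} L.card ≤ #α := by
    rw [Cardinal.lift_id, Cardinal.lift_id]
    calc #(β ⊕ Fin 1) + L.card ≤ #α + #α :=
          add_le_add hβ1 (hL.trans (Cardinal.infinite_iff.1 inferInstance))
      _ = #α := Cardinal.add_eq_self (Cardinal.infinite_iff.1 inferInstance)
  exact max_le (Cardinal.infinite_iff.1 inferInstance) this

/-- Keisler: for a regular `λ⁺`-good ultrafilter `D` on `α` and any structure `M` in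
a countable language, the ultrapower `M^α/D` is `#α⁺`-saturated. -/
theorem stmt_7 {L : FirstOrder.Language.{u, u}} (hL : L.card ≤ ℵ₀)
    {α : Type u} [Infinite α] [DecidableEq α] (D : Ultrafilter α)
    (hreg : ∃ X : α → Set α, (∀ i, X i ∈ D) ∧
      ∀ s : Set α, s.Infinite → ⋂ i ∈ s, X i = ∅)
    (hgood : ∀ f : Finset α → Set α, (∀ u, f u ∈ D) →
      (∀ u v : Finset α, u ⊆ v → f v ⊆ f u) →
      ∃ f' : Finset α → Set α, (∀ u, f' u ∈ D) ∧ (∀ u, f' u ⊆ f u) ∧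
        ∀ u v : Finset α, f' u ∩ f' v = f' (u ∪ v))
    (M : Type u) [L.Structure M] [Nonempty M] :
    realizesTypesLE L ((D : Filter α).Product fun _ => M) #α := by
  classical
  intro A hA p hfs
  obtain ⟨X, hXD, hXint⟩ := hreg
  -- each point lies in only finitely many of the regularizing sets
  have hfin : ∀ t : α, {i | t ∈ X i}.Finite := by
    intro t
    by_contra h
    have := hXint _ h
    have ht : t ∈ ⋂ i ∈ {i | t ∈ X i}, X i := by
      simp only [Set.mem_iInter]; exact fun i hi => hi
    rw [this] at ht
    exact ht
  by_cases hp : p.Nonempty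
  · -- enumerate the type with a surjection from α
    obtain ⟨G, hG⟩ : ∃ G : α → ↥p, Function.Surjective G := by
      have hcard : #(↥p) ≤ #α :=
        (Cardinal.mk_subtype_le _).trans (card_formula_le hL ↥A hA)
      obtain ⟨e⟩ := Cardinal.le_def _ _ |>.1 hcard
      haveI : Nonempty ↥p := hp.to_subtype
      exact ⟨Function.invFun e, Function.invFun_surjective e.injective⟩
    -- representatives of the parameters
    set rep : ↥A → α → M := fun a => Quotient.out a.val with hrepdef
    have hrep : ∀ a : ↥A, ((rep a : (D : Filter α).Product fun _ => M)) = a.val :=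
      fun a => Quotient.out_eq a.val
    -- the monotone D-valued function
    set f : Finset α → Set α := fun u =>
      (⋂ i ∈ u, X i) ∩
        {t | ∃ x : M, ∀ i ∈ u, (G i : L.Formula (↥A ⊕ Fin 1)).Realize
          (Sum.elim (fun a => rep a t) fun _ => x)} with hfdef
    have hfD : ∀ u, f u ∈ D := by
      intro u
      refine inter_mem ((biInter_finset_mem u).2 fun i _ => hXD i) ?_
      obtain ⟨x, hx⟩ := hfs (u.image fun i => (G i : L.Formula (↥A ⊕ Fin 1)))
        (by intro φ hφ; simp only [Finset.coe_image, Set.mem_image] at hφ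
            obtain ⟨i, _, rfl⟩ := hφ; exact (G i).2)
      have hx' : ∀ i ∈ u, (G i : L.Formula (↥A ⊕ Fin 1)).Realize
          (Sum.elim Subtype.val fun _ => x) := by
        intro i hi
        exact hx _ (Finset.mem_image_of_mem _ hi)
      set xr : α → M := Quotient.out x with hxrdef
      have hxr : ((xr : (D : Filter α).Product fun _ => M)) = x := Quotient.out_eq x
      have key : ∀ i ∈ u, ∀ᶠ t in (D : Filter α),
          (G i : L.Formula (↥A ⊕ Fin 1)).Realize
            (Sum.elim (fun a => rep a t) fun _ => xr t) := by
        intro i hi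
        have := (FirstOrder.Language.Ultraproduct.realize_formula_cast
          (u := D) (M := fun _ => M) (G i : L.Formula (↥A ⊕ Fin 1))
          (Sum.elim (fun a => rep a) fun _ => xr)).1
        have heq : (fun b => ((Sum.elim (fun a => rep a) fun _ : Fin 1 => xr) b :
            (D : Filter α).Product fun _ => M)) = Sum.elim Subtype.val fun _ => x := by
          funext b; cases b with
          | inl a => exact hrep a
          | inr j => exact hxr
        rw [heq] at this
        have := this (hx' i hi)
        refine this.mono fun t ht => ?_
        have heq2 : (fun b => Sum.elim (fun a => rep a) (fun _ : Fin 1 => xr) b t) =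
            Sum.elim (fun a => rep a t) fun _ => xr t := by
          funext b; cases b <;> rfl
        rwa [heq2] at ht
      have := (eventually_all_finset u (l := (D : Filter α))).2 key
      refine mem_of_superset this ?_
      intro t ht
      exact ⟨xr t, ht⟩
    have hfmono : ∀ u v : Finset α, u ⊆ v → f v ⊆ f u := by
      intro u v huv t ht
      obtain ⟨ht1, x, hx⟩ := ht
      refine ⟨?_, x, fun i hi => hx i (huv hi)⟩
      simp only [Set.mem_iInter] at ht1 ⊢
      exact fun i hi => ht1 i (huv hi)
    obtain ⟨f', hf'D, hf'sub, hf'mul⟩ := hgood f hfD hfmono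
    -- for each t, the set of indices i with t ∈ f' {i} is finite
    have hSfin : ∀ t : α, {i | t ∈ f' {i}}.Finite := by
      intro t
      refine (hfin t).subset fun i hi => ?_
      have := hf'sub {i} hi
      obtain ⟨h1, -⟩ := this
      simpa using h1
    set U : α → Finset α := fun t => (hSfin t).toFinset with hUdef
    have hUmem : ∀ t i, i ∈ U t ↔ t ∈ f' {i} := by
      intro t i; simp [hUdef, Set.Finite.mem_toFinset]
    -- nonempty multiplicativity
    have hmul : ∀ (t : α) (w : Finset α), w.Nonempty → (∀ i ∈ w, t ∈ f' {i}) → t ∈ f' w := by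
      intro t w
      induction w using Finset.induction_on with
      | empty => intro h; exact absurd h (by simp)
      | @insert a w ha ih =>
        intro _ hall
        rcases Finset.eq_empty_or_nonempty w with rfl | hw
        · simpa using hall a (by simp)
        · have h1 : t ∈ f' {a} := hall a (by simp)
          have h2 : t ∈ f' w := ih hw fun i hi => hall i (by simp [hi])
          have : t ∈ f' {a} ∩ f' w := ⟨h1, h2⟩
          rw [hf'mul] at this
          rwa [← Finset.insert_eq] at this
    -- the witness function
    set w : α → M := fun t =>
      if h : ∃ x : M, ∀ i ∈ U t, (G i : L.Formula (↥A ⊕ Fin 1)).Realize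
          (Sum.elim (fun a => rep a t) fun _ => x)
        then h.choose else Classical.arbitrary M with hwdef
    refine ⟨(w : (D : Filter α).Product fun _ => M), ?_⟩
    intro φ hφ
    obtain ⟨i, hi⟩ := hG ⟨φ, hφ⟩
    have key : ∀ᶠ t in (D : Filter α),
        φ.Realize (Sum.elim (fun a => rep a t) fun _ => w t) := by
      refine mem_of_superset (hf'D {i}) fun t ht => ?_
      have hiU : i ∈ U t := (hUmem t i).2 ht
      have htU : t ∈ f' (U t) := hmul t (U t) ⟨i, hiU⟩ fun j hj => (hUmem t j).1 hj
      have htf : t ∈ f (U t) := hf'sub _ htU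
      obtain ⟨-, hx⟩ := htf
      have hwt : w t = hx.choose := by rw [hwdef]; exact dif_pos hx
      have hw : ∀ j ∈ U t, (G j : L.Formula (↥A ⊕ Fin 1)).Realize
          (Sum.elim (fun a => rep a t) fun _ => w t) := by
        rw [hwt]; exact hx.choose_spec
      have := hw i hiU
      rwa [hi] at this
    have lor := (FirstOrder.Language.Ultraproduct.realize_formula_cast
      (u := D) (M := fun _ => M) φ (Sum.elim (fun a => rep a) fun _ => w)).2
    have heq : (fun b => ((Sum.elim (fun a => rep a) fun _ : Fin 1 => w) b :
        (D : Filter α).Product fun _ => M)) = Sum.elim Subtype.val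
          fun _ => (w : (D : Filter α).Product fun _ => M) := by
      funext b; cases b with
      | inl a => exact hrep a
      | inr j => rfl
    rw [heq] at lor
    refine lor (key.mono fun t ht => ?_)
    have heq2 : (fun b => Sum.elim (fun a => rep a) (fun _ : Fin 1 => w) b t) =
        Sum.elim (fun a => rep a t) fun _ => w t := by
      funext b; cases b <;> rfl
    rw [heq2]
    exact ht
  · -- the type is empty
    refine ⟨Classical.arbitrary _, fun φ hφ => absurd ⟨φ, hφ⟩ hp⟩
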